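/- If X ~ Gamma(α, λ), then its Hankel transform of order α−1 equals H_{X,α−1}(t) = e^{−t/λ} for all t ≥ 0. -/

import Mathlib

open MeasureTheory Real Set

lemma integrableOn_rpow_exp (β lam : ℝ) (hβ : 0 < β) (hlam : 0 < lam) :
    IntegrableOn (fun x : ℝ => x ^ (β - 1) * Real.exp (-(lam * x))) (Ioi 0) := by
  have := integrableOn_rpow_mul_exp_neg_mul_rpow (p := 1) (s := β - 1) (b := lam)
    (by linarith) zero_lt_one hlam
  refine this.congr_fun (fun x hx => ?_) measurableSet_Ioi
  simp only [Real.rpow_one]; ring_nf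

lemma ptwise_eq (α lam t : ℝ) (hα : 0 < α) (hlam : 0 < lam) (j : ℕ) (s : ℝ)
    {x : ℝ} (hx : 0 < x) :
    s * (t * x) ^ j / ((Nat.factorial j : ℝ) * Real.Gamma (α + j)) *
        (lam ^ α * x ^ (α - 1) * Real.exp (-(lam * x)) / Real.Gamma α)
      = (s * t ^ j * lam ^ α / ((Nat.factorial j : ℝ) * Real.Gamma (α + j) * Real.Gamma α)) *
        (x ^ (α + (j : ℝ) - 1) * Real.exp (-(lam * x))) := by
  have hαj : (0 : ℝ) < α + j := by positivity
  have hG : Real.Gamma (α + j) ≠ 0 := (Real.Gamma_pos_of_pos hαj).ne'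
  have hGα : Real.Gamma α ≠ 0 := (Real.Gamma_pos_of_pos hα).ne'
  have hfac : ((Nat.factorial j : ℝ)) ≠ 0 := by positivity
  have hxp : x ^ (α + (j : ℝ) - 1) = x ^ (α - 1) * x ^ j := by
    rw [← Real.rpow_natCast x j, ← Real.rpow_add hx]; ring_nf
  rw [hxp, mul_pow]
  field_simp

lemma term_integrableOn (α lam t : ℝ) (hα : 0 < α) (hlam : 0 < lam) (j : ℕ) (s : ℝ) :
    IntegrableOn (fun x : ℝ => s * (t * x) ^ j / ((Nat.factorial j : ℝ) * Real.Gamma (α + j)) *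
        (lam ^ α * x ^ (α - 1) * Real.exp (-(lam * x)) / Real.Gamma α)) (Ioi 0) := by
  have base : IntegrableOn (fun x : ℝ =>
      (s * t ^ j * lam ^ α / ((Nat.factorial j : ℝ) * Real.Gamma (α + j) * Real.Gamma α)) *
        (x ^ (α + (j : ℝ) - 1) * Real.exp (-(lam * x)))) (Ioi 0) :=
    (integrableOn_rpow_exp (α + (j : ℝ)) lam (by positivity) hlam).const_mul _
  exact base.congr_fun (fun x hx => (ptwise_eq α lam t hα hlam j s hx).symm) measurableSet_Ioi

lemma term_integral (α lam t : ℝ) (hα : 0 < α) (hlam : 0 < lam) (j : ℕ) (s : ℝ) :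
    ∫ x in Ioi (0 : ℝ), s * (t * x) ^ j / ((Nat.factorial j : ℝ) * Real.Gamma (α + j)) *
        (lam ^ α * x ^ (α - 1) * Real.exp (-(lam * x)) / Real.Gamma α)
      = s * (t / lam) ^ j / ((Nat.factorial j : ℝ) * Real.Gamma α) := by
  have hαj : (0 : ℝ) < α + j := by positivity
  have hG : Real.Gamma (α + j) ≠ 0 := (Real.Gamma_pos_of_pos hαj).ne'
  have hGα : Real.Gamma α ≠ 0 := (Real.Gamma_pos_of_pos hα).ne'
  have hfac : ((Nat.factorial j : ℝ)) ≠ 0 := by positivity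
  set C : ℝ := s * t ^ j * lam ^ α / ((Nat.factorial j : ℝ) * Real.Gamma (α + j) * Real.Gamma α)
    with hC
  have key : ∫ x in Ioi (0 : ℝ), s * (t * x) ^ j / ((Nat.factorial j : ℝ) * Real.Gamma (α + j)) *
        (lam ^ α * x ^ (α - 1) * Real.exp (-(lam * x)) / Real.Gamma α)
      = C * ∫ x in Ioi (0 : ℝ), x ^ (α + (j : ℝ) - 1) * Real.exp (-(lam * x)) := by
    rw [← integral_const_mul]
    exact setIntegral_congr_fun measurableSet_Ioi
      (fun x hx => ptwise_eq α lam t hα hlam j s hx)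
  rw [key, integral_rpow_mul_exp_neg_mul_Ioi (by positivity) hlam, hC]
  have h1 : (1 / lam) ^ (α + (j : ℝ)) = (1 / lam) ^ α * (1 / lam) ^ j := by
    rw [← Real.rpow_natCast (1 / lam) j, ← Real.rpow_add (by positivity)]
  have h2 : lam ^ α * (1 / lam) ^ α = 1 := by
    rw [← Real.mul_rpow hlam.le (by positivity), mul_one_div_cancel hlam.ne', Real.one_rpow]
  have h3 : (t / lam) ^ j = t ^ j * (1 / lam) ^ j := by
    rw [div_pow, one_div, inv_pow, div_eq_mul_inv]
  rw [h1, h3]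
  field_simp
  linear_combination (s * t ^ j) * h2

/-- The entire Hankel kernel: `hankelKernel ν u = Σ_{j≥0} (−1)^j u^j/(j! Γ(ν+1+j))`,
which equals `u^{−ν/2} J_ν(2√u)` for `u > 0`. -/
noncomputable def hankelKernel (ν u : ℝ) : ℝ :=
  ∑' j : ℕ, (-1 : ℝ) ^ j * u ^ j / ((Nat.factorial j : ℝ) * Real.Gamma (ν + 1 + j))

/-- If `X ~ Gamma(α,λ)`, then its Hankel transform of order `α−1` equals
`H_{X,α−1}(t) = e^{−t/λ}` for all `t ≥ 0`. -/
theorem hankel_transform_gamma_order (α lam t : ℝ) (hα : 0 < α) (hlam : 0 < lam)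
    (ht : 0 ≤ t) :
    Real.Gamma α *
        ∫ x in Ioi (0 : ℝ), hankelKernel (α - 1) (t * x) *
          (lam ^ α * x ^ (α - 1) * Real.exp (-(lam * x)) / Real.Gamma α)
      = Real.exp (-t / lam) := by
  have hGα : Real.Gamma α ≠ 0 := (Real.Gamma_pos_of_pos hα).ne'
  set F : ℕ → ℝ → ℝ := fun j x =>
    (-1 : ℝ) ^ j * (t * x) ^ j / ((Nat.factorial j : ℝ) * Real.Gamma (α + j)) *
      (lam ^ α * x ^ (α - 1) * Real.exp (-(lam * x)) / Real.Gamma α) with hF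
  have step1 : ∀ x : ℝ, hankelKernel (α - 1) (t * x) *
      (lam ^ α * x ^ (α - 1) * Real.exp (-(lam * x)) / Real.Gamma α) = ∑' j, F j x := by
    intro x
    rw [hankelKernel, ← tsum_mul_right]
    exact tsum_congr fun j => by rw [hF, show α - 1 + 1 + (j : ℝ) = α + (j : ℝ) by ring]
  have hInt : ∀ j : ℕ, Integrable (F j) (volume.restrict (Ioi 0)) := fun j =>
    term_integrableOn α lam t hα hlam j ((-1 : ℝ) ^ j)
  have hnorm : ∀ j : ℕ, (∫ x in Ioi (0 : ℝ), ‖F j x‖)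
      = (t / lam) ^ j / ((Nat.factorial j : ℝ) * Real.Gamma α) := by
    intro j
    have := term_integral α lam t hα hlam j 1
    rw [one_mul] at this
    rw [← this]
    refine setIntegral_congr_fun measurableSet_Ioi (fun x hx => ?_)
    have hx : (0 : ℝ) < x := hx
    have hd : (0 : ℝ) ≤ (Nat.factorial j : ℝ) * Real.Gamma (α + j) := by
      have : (0:ℝ) < α + j := by positivity
      have := Real.Gamma_pos_of_pos this
      positivity
    have hD : (0 : ℝ) ≤ lam ^ α * x ^ (α - 1) * Real.exp (-(lam * x)) / Real.Gamma α := by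
      have h1 : (0:ℝ) ≤ x ^ (α - 1) := Real.rpow_nonneg hx.le _
      have h2 : (0:ℝ) < Real.Gamma α := Real.Gamma_pos_of_pos hα
      have h3 : (0:ℝ) ≤ lam ^ α := (Real.rpow_pos_of_pos hlam α).le
      positivity
    have htx : (0 : ℝ) ≤ (t * x) ^ j := by positivity
    rw [hF, Real.norm_eq_abs, abs_mul, abs_div, abs_mul, abs_pow, abs_neg, abs_one, one_pow,
      abs_of_nonneg htx, abs_of_nonneg hd, abs_of_nonneg hD, one_mul]
  have hSum : Summable fun j : ℕ => ∫ x in Ioi (0 : ℝ), ‖F j x‖ := by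
    simp_rw [hnorm, ← div_div]
    exact (Real.summable_pow_div_factorial (t / lam)).div_const _
  have step2 : (∫ x in Ioi (0 : ℝ), ∑' j, F j x) = ∑' j, ∫ x in Ioi (0 : ℝ), F j x :=
    (integral_tsum_of_summable_integral_norm hInt hSum).symm
  have step3 : ∀ j : ℕ, (∫ x in Ioi (0 : ℝ), F j x)
      = ((-t / lam) ^ j / (Nat.factorial j : ℝ)) / Real.Gamma α := by
    intro j
    rw [hF, term_integral α lam t hα hlam j ((-1 : ℝ) ^ j), neg_div, neg_pow]
    ring
  simp_rw [step1]
  rw [step2, tsum_congr step3, tsum_div_const, mul_comm, div_mul_cancel₀ _ hGα,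
    Real.exp_eq_exp_ℝ, NormedSpace.exp_eq_tsum_div]
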